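/- Let A be a CEFA over Σ with k cost registers. Then the set {(w, (i, ℓ, n)) ∈ Σ* × ℤ^{2+k} : 0 ≤ i, 0 ≤ ℓ, i + ℓ ≤ |w|, and (w[i..i+ℓ−1], n) ∈ L(A)} is a cost-enriched regular language with k + 2 cost registers, where w[i..i+ℓ−1] denotes the factor of w of length ℓ starting at (0-based) position i (the empty word when ℓ = 0). Consequently, the cost-enriched pre-image of L(A) under the substring function (taking a string together with a start position and a length) is a cost-enriched recognisable relation, and a CEFA representation of it can be obtained whose size is linear in the size of A. -/

import Mathlib

/-- A cost-enriched finite automaton (CEFA) over alphabet `σ` with `k` cost registers: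
states `Q`, a transition set `δ` of tuples `(q, a, q', η)` with update vector
`η : Fin k → ℤ`, initial states `I` and final states `F`. -/
structure CEFA (σ : Type) (k : ℕ) where
  Q : Type
  δ : Set (Q × σ × Q × (Fin k → ℤ))
  I : Set Q
  F : Set Q

namespace CEFA

variable {σ : Type} {k : ℕ}

/-- A CEFA is finite if its state set and its transition set are finite. -/
def IsFinite (A : CEFA σ k) : Prop := Finite A.Q ∧ A.δ.Finite

/-- `Reach A q w n q'` holds if there is a sequence of transitions of `A` from `q` to `q'`
reading the word `w`, whose cost updates sum up to `n`. -/
inductive Reach (A : CEFA σ k) : A.Q → List σ → (Fin k → ℤ) → A.Q → Prop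
  | nil (q : A.Q) : Reach A q [] 0 q
  | cons {q q' q'' : A.Q} {a : σ} {w : List σ} {η n : Fin k → ℤ} :
      (q, a, q', η) ∈ A.δ → Reach A q' w n q'' → Reach A q (a :: w) (η + n) q''

/-- The cost-enriched language of a CEFA: all pairs `(w, n)` admitting an accepting run. -/
def Lang (A : CEFA σ k) : Set (List σ × (Fin k → ℤ)) :=
  {p | ∃ q₀ qf, q₀ ∈ A.I ∧ qf ∈ A.F ∧ Reach A q₀ p.1 p.2 qf}

end CEFA

/-- A cost-enriched regular language (CERL): a set accepted by some (finite) CEFA. -/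
def IsCERL {σ : Type} {k : ℕ} (L : Set (List σ × (Fin k → ℤ))) : Prop :=
  ∃ A : CEFA σ k, A.IsFinite ∧ A.Lang = L

namespace SubstrCEFA

variable {σ : Type} {k : ℕ}

def pad (a b : ℤ) (n : Fin k → ℤ) : Fin (2+k) → ℤ := Fin.append ![a,b] n

lemma pad_add (a b c d : ℤ) (n m : Fin k → ℤ) :
    pad a b n + pad c d m = pad (a+c) (b+d) (n+m) := by
  funext x
  simp only [Pi.add_apply, pad]
  induction x using Fin.addCases with
  | left i => simp only [Fin.append_left]; fin_cases i <;> simp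
  | right i => simp [Fin.append_right]

lemma pad_zero : pad 0 0 (0 : Fin k → ℤ) = 0 := by
  funext x
  simp only [pad]
  induction x using Fin.addCases with
  | left i => simp only [Fin.append_left]; fin_cases i <;> simp
  | right i => simp [Fin.append_right]

lemma pad_congr {a a' b b' : ℤ} {n n' : Fin k → ℤ} (h1 : a = a') (h2 : b = b')
    (h3 : n = n') : pad a b n = pad a' b' n' := by subst h1 h2 h3; rfl

inductive St (Q : Type) where
  | pre | mid (q : Q) | post
deriving DecidableEq

open St

def B (A : CEFA σ k) : CEFA σ (2+k) where
  Q := St A.Q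
  δ := (fun a : σ => ((pre : St A.Q), a, pre, pad 1 0 0)) '' Set.univ
     ∪ (fun t : A.Q × σ × A.Q × (Fin k → ℤ) =>
          ((pre : St A.Q), t.2.1, mid t.2.2.1, pad 0 1 t.2.2.2)) '' {t ∈ A.δ | t.1 ∈ A.I}
     ∪ (fun t : A.Q × σ × A.Q × (Fin k → ℤ) =>
          (mid t.1, t.2.1, mid t.2.2.1, pad 0 1 t.2.2.2)) '' A.δ
     ∪ (fun p : A.Q × σ => (mid p.1, p.2, (post : St A.Q), 0)) '' {p | p.1 ∈ A.F}
     ∪ (fun a : σ => ((pre : St A.Q), a, post, (0 : Fin (2+k) → ℤ))) ''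
          {_a : σ | (A.I ∩ A.F).Nonempty}
     ∪ (fun a : σ => ((post : St A.Q), a, post, (0 : Fin (2+k) → ℤ))) '' Set.univ
  I := {pre}
  F := {s | s = post ∨ (∃ q ∈ A.F, s = mid q) ∨ (s = pre ∧ (A.I ∩ A.F).Nonempty)}

lemma B_finite (A : CEFA σ k) [Fintype σ] (hA : A.IsFinite) : (B A).IsFinite := by
  obtain ⟨hQ, hδ⟩ := hA
  constructor
  · show Finite (St A.Q)
    haveI : Finite A.Q := hQ
    have hinj : Function.Injective
        (fun s : St A.Q => (match s with
          | pre => Sum.inr false | mid q => Sum.inl q | post => Sum.inr true :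
            A.Q ⊕ Bool)) := by
      intro s t h
      cases s <;> cases t <;> simp_all
    exact Finite.of_injective _ hinj
  · refine (((((Set.toFinite _).image _).union ((hδ.subset (Set.sep_subset _ _)).image _)).union
      (hδ.image _)).union ((Set.toFinite _).image _)).union
      ((Set.toFinite _).image _) |>.union ((Set.toFinite _).image _)


open CEFA

section
variable {A : CEFA σ k}

lemma trans_cases {s s' : St A.Q} {a : σ} {η : Fin (2+k) → ℤ}
    (h : ((s, a, s', η) : (B A).Q × σ × (B A).Q × (Fin (2+k) → ℤ)) ∈ (B A).δ) :
    (s = pre ∧ s' = pre ∧ η = pad 1 0 0)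
    ∨ (∃ q q' η₀, (q, a, q', η₀) ∈ A.δ ∧ q ∈ A.I ∧ s = pre ∧ s' = mid q' ∧ η = pad 0 1 η₀)
    ∨ (∃ q q' η₀, (q, a, q', η₀) ∈ A.δ ∧ s = mid q ∧ s' = mid q' ∧ η = pad 0 1 η₀)
    ∨ (∃ q, q ∈ A.F ∧ s = mid q ∧ s' = post ∧ η = 0)
    ∨ ((A.I ∩ A.F).Nonempty ∧ s = pre ∧ s' = post ∧ η = 0)
    ∨ (s = post ∧ s' = post ∧ η = 0) := by
  rcases h with ((((h | h) | h) | h) | h) | h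
  · obtain ⟨b, -, heq⟩ := h
    obtain ⟨e1, e2⟩ := Prod.mk.inj heq; obtain ⟨e2, e3⟩ := Prod.mk.inj e2
    obtain ⟨e3, e4⟩ := Prod.mk.inj e3; have heq := And.intro e1 (And.intro e2 (And.intro e3 e4))
    exact Or.inl ⟨heq.1.symm, heq.2.2.1.symm, heq.2.2.2.symm⟩
  · obtain ⟨⟨q, b, q', η₀⟩, ⟨hδ, hI⟩, heq⟩ := h
    obtain ⟨e1, e2⟩ := Prod.mk.inj heq; obtain ⟨e2, e3⟩ := Prod.mk.inj e2
    obtain ⟨e3, e4⟩ := Prod.mk.inj e3; have heq := And.intro e1 (And.intro e2 (And.intro e3 e4))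
    exact Or.inr <| Or.inl ⟨q, q', η₀, heq.2.1 ▸ hδ, hI, heq.1.symm, heq.2.2.1.symm,
      heq.2.2.2.symm⟩
  · obtain ⟨⟨q, b, q', η₀⟩, hδ, heq⟩ := h
    obtain ⟨e1, e2⟩ := Prod.mk.inj heq; obtain ⟨e2, e3⟩ := Prod.mk.inj e2
    obtain ⟨e3, e4⟩ := Prod.mk.inj e3; have heq := And.intro e1 (And.intro e2 (And.intro e3 e4))
    exact Or.inr <| Or.inr <| Or.inl ⟨q, q', η₀, heq.2.1 ▸ hδ, heq.1.symm, heq.2.2.1.symm,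
      heq.2.2.2.symm⟩
  · obtain ⟨⟨q, b⟩, hF, heq⟩ := h
    obtain ⟨e1, e2⟩ := Prod.mk.inj heq; obtain ⟨e2, e3⟩ := Prod.mk.inj e2
    obtain ⟨e3, e4⟩ := Prod.mk.inj e3; have heq := And.intro e1 (And.intro e2 (And.intro e3 e4))
    exact Or.inr <| Or.inr <| Or.inr <| Or.inl ⟨q, hF, heq.1.symm, heq.2.2.1.symm,
      heq.2.2.2.symm⟩
  · obtain ⟨b, hne, heq⟩ := h
    obtain ⟨e1, e2⟩ := Prod.mk.inj heq; obtain ⟨e2, e3⟩ := Prod.mk.inj e2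
    obtain ⟨e3, e4⟩ := Prod.mk.inj e3; have heq := And.intro e1 (And.intro e2 (And.intro e3 e4))
    exact Or.inr <| Or.inr <| Or.inr <| Or.inr <| Or.inl ⟨hne, heq.1.symm, heq.2.2.1.symm,
      heq.2.2.2.symm⟩
  · obtain ⟨b, -, heq⟩ := h
    obtain ⟨e1, e2⟩ := Prod.mk.inj heq; obtain ⟨e2, e3⟩ := Prod.mk.inj e2
    obtain ⟨e3, e4⟩ := Prod.mk.inj e3; have heq := And.intro e1 (And.intro e2 (And.intro e3 e4))
    exact Or.inr <| Or.inr <| Or.inr <| Or.inr <| Or.inr ⟨heq.1.symm, heq.2.2.1.symm,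
      heq.2.2.2.symm⟩

lemma mem1 (a : σ) :
    (((pre : St A.Q), a, pre, pad 1 0 0) : (B A).Q × σ × (B A).Q × _) ∈ (B A).δ :=
  Or.inl <| Or.inl <| Or.inl <| Or.inl <| Or.inl ⟨a, trivial, rfl⟩

lemma mem2 {q q' : A.Q} {a : σ} {η : Fin k → ℤ} (h : (q, a, q', η) ∈ A.δ) (hI : q ∈ A.I) :
    (((pre : St A.Q), a, mid q', pad 0 1 η) : (B A).Q × σ × (B A).Q × _) ∈ (B A).δ :=
  Or.inl <| Or.inl <| Or.inl <| Or.inl <| Or.inr ⟨(q, a, q', η), ⟨h, hI⟩, rfl⟩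

lemma mem3 {q q' : A.Q} {a : σ} {η : Fin k → ℤ} (h : (q, a, q', η) ∈ A.δ) :
    ((mid q, a, mid q', pad 0 1 η) : (B A).Q × σ × (B A).Q × _) ∈ (B A).δ :=
  Or.inl <| Or.inl <| Or.inl <| Or.inr ⟨(q, a, q', η), h, rfl⟩

lemma mem4 {q : A.Q} (hF : q ∈ A.F) (a : σ) :
    ((mid q, a, (post : St A.Q), 0) : (B A).Q × σ × (B A).Q × _) ∈ (B A).δ :=
  Or.inl <| Or.inl <| Or.inr ⟨(q, a), hF, rfl⟩

lemma mem5 (hne : (A.I ∩ A.F).Nonempty) (a : σ) :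
    (((pre : St A.Q), a, post, 0) : (B A).Q × σ × (B A).Q × _) ∈ (B A).δ :=
  Or.inl <| Or.inr ⟨a, hne, rfl⟩

lemma mem6 (a : σ) :
    (((post : St A.Q), a, post, 0) : (B A).Q × σ × (B A).Q × _) ∈ (B A).δ :=
  Or.inr ⟨a, trivial, rfl⟩

lemma post_reach : ∀ {s : (B A).Q} {w c s'}, Reach (B A) s w c s' → s = post →
    s' = post ∧ c = 0 := by
  intro s w c s' h
  induction h with
  | nil q => exact fun hq => ⟨hq, rfl⟩
  | cons ht hr ih =>
    rintro rfl
    rcases trans_cases ht with ⟨h1, -⟩ | ⟨q, q', η₀, -, -, h1, -⟩ | ⟨q, q', η₀, -, h1, -⟩ |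
      ⟨q, -, h1, -⟩ | ⟨-, h1, -⟩ | ⟨-, h2, h4⟩
    · exact absurd h1 (by simp)
    · exact absurd h1 (by simp)
    · exact absurd h1 (by simp)
    · exact absurd h1 (by simp)
    · exact absurd h1 (by simp)
    · obtain ⟨he, hc⟩ := ih h2
      exact ⟨he, by rw [h4, hc, add_zero]⟩

lemma mid_reach : ∀ {s : (B A).Q} {w c f}, Reach (B A) s w c f → f ∈ (B A).F →
    ∀ q, s = mid q → ∃ (u v : List σ) (n : Fin k → ℤ) (q'' : A.Q),
      w = u ++ v ∧ c = pad 0 (u.length : ℤ) n ∧ q'' ∈ A.F ∧ A.Reach q u n q'' := by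
  intro s w c f h
  induction h with
  | nil q =>
    rintro hf q₀ rfl
    rcases hf with h1 | ⟨q', hq', h1⟩ | ⟨h1, -⟩
    · exact absurd h1 (by simp)
    · obtain hq : q₀ = q' := by simpa using h1
      exact ⟨[], [], 0, q₀, rfl, by simp [pad_zero], by rw [hq]; exact hq',
        CEFA.Reach.nil _⟩
    · exact absurd h1 (by simp)
  | cons ht hr ih =>
    rintro hf q₀ rfl
    rcases trans_cases ht with ⟨h1, -⟩ | ⟨q, q', η₀, -, -, h1, -⟩ |
      ⟨q, q', η₀, hδ, h1, h2, h3⟩ | ⟨q, hqF, h1, h2, h3⟩ | ⟨-, h1, -⟩ | ⟨h1, -⟩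
    · exact absurd h1 (by simp)
    · exact absurd h1 (by simp)
    · obtain rfl : q₀ = q := by simpa using h1
      obtain ⟨u, v, n, q'', rfl, hc, hq'', hrun⟩ := ih hf q' h2
      refine ⟨_ :: u, v, η₀ + n, q'', rfl, ?_, hq'', CEFA.Reach.cons hδ hrun⟩
      rw [h3, hc, pad_add]
      exact pad_congr (by ring) (by push_cast [List.length_cons]; ring) rfl
    · obtain hq : q₀ = q := by simpa using h1
      obtain ⟨rfl, rfl⟩ := post_reach hr h2
      exact ⟨[], _, 0, q₀, rfl, by rw [h3, add_zero]; simp [pad_zero],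
        by rw [hq]; exact hqF, CEFA.Reach.nil _⟩
    · exact absurd h1 (by simp)
    · exact absurd h1 (by simp)

lemma pre_reach : ∀ {s : (B A).Q} {w c f}, Reach (B A) s w c f → f ∈ (B A).F → s = pre →
    ∃ (i l : ℕ) (n : Fin k → ℤ), c = pad (i : ℤ) (l : ℤ) n ∧ i + l ≤ w.length ∧
      ((w.drop i).take l, n) ∈ A.Lang := by
  intro s w c f h
  induction h with
  | nil q =>
    rintro hf rfl
    rcases hf with h1 | ⟨q', -, h1⟩ | ⟨-, q', hq'⟩
    · exact absurd h1 (by simp)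
    · exact absurd h1 (by simp)
    · exact ⟨0, 0, 0, by simp [pad_zero], by simp,
        ⟨q', q', hq'.1, hq'.2, CEFA.Reach.nil _⟩⟩
  | cons ht hr ih =>
    rintro hf rfl
    rcases trans_cases ht with ⟨-, h2, h3⟩ | ⟨q, q', η₀, hδ, hqI, -, h2, h3⟩ |
      ⟨q, q', η₀, -, h1, -⟩ | ⟨q, -, h1, -⟩ | ⟨hne, -, h2, h3⟩ | ⟨h1, -⟩
    · obtain ⟨i, l, n, hc, hle, hL⟩ := ih hf h2
      refine ⟨i + 1, l, n, ?_, by simp; omega, ?_⟩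
      · rw [h3, hc, pad_add]
        exact pad_congr (by push_cast; ring) (zero_add _) (zero_add _)
      · simpa [List.drop_succ_cons] using hL
    · obtain ⟨u, v, n, q'', rfl, hc, hq''F, hrun⟩ := mid_reach hr hf q' h2
      refine ⟨0, u.length + 1, η₀ + n, ?_, by simp, ?_⟩
      · rw [h3, hc, pad_add]
        exact pad_congr (by ring) (by push_cast [List.length_cons]; ring) rfl
      · refine ⟨q, q'', hqI, hq''F, ?_⟩
        simpa [List.take_left] using CEFA.Reach.cons hδ hrun
    · exact absurd h1 (by simp)
    · exact absurd h1 (by simp)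
    · obtain ⟨rfl, rfl⟩ := post_reach hr h2
      exact ⟨0, 0, 0, by rw [h3, add_zero]; simp [pad_zero], by simp,
        ⟨hne.choose, hne.choose, hne.choose_spec.1, hne.choose_spec.2, CEFA.Reach.nil _⟩⟩
    · exact absurd h1 (by simp)

lemma reach_trans {C : CEFA σ k} {s s' s'' : C.Q} {u v : List σ} {c d : Fin k → ℤ}
    (h1 : Reach C s u c s') (h2 : Reach C s' v d s'') :
    Reach C s (u ++ v) (c + d) s'' := by
  induction h1 with
  | nil q => simpa using h2
  | cons ht hr ih => simpa [add_assoc] using CEFA.Reach.cons ht (ih h2)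

lemma post_run (v : List σ) : Reach (B A) post v 0 post := by
  induction v with
  | nil => exact CEFA.Reach.nil _
  | cons a v ih => simpa using CEFA.Reach.cons (mem6 (A := A) a) ih

lemma pre_run (x : List σ) : Reach (B A) pre x (pad (x.length : ℤ) 0 0) pre := by
  induction x with
  | nil => simpa [pad_zero] using CEFA.Reach.nil (A := B A) St.pre
  | cons a x ih =>
    have h := CEFA.Reach.cons (mem1 (A := A) a) ih
    rw [pad_add] at h
    have hc : pad (((a :: x : List σ).length : ℤ)) 0 (0 : Fin k → ℤ) =
        pad (1 + (x.length : ℤ)) (0 + 0) ((0 : Fin k → ℤ) + 0) :=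
      pad_congr (by push_cast [List.length_cons]; ring) (add_zero 0).symm (add_zero 0).symm
    rw [hc]
    exact h

lemma mid_run {q q'' : A.Q} {u : List σ} {n : Fin k → ℤ} (h : A.Reach q u n q'')
    (hF : q'' ∈ A.F) : ∀ v : List σ, ∃ f ∈ (B A).F,
      Reach (B A) (mid q) (u ++ v) (pad 0 (u.length : ℤ) n) f := by
  induction h with
  | nil q =>
    intro v
    cases v with
    | nil =>
      refine ⟨mid q, Or.inr (Or.inl ⟨q, hF, rfl⟩), ?_⟩
      simpa [pad_zero] using CEFA.Reach.nil (A := B A) (St.mid q)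
    | cons b v' =>
      refine ⟨post, Or.inl rfl, ?_⟩
      have := CEFA.Reach.cons (mem4 hF b) (post_run (A := A) v')
      simpa [pad_zero] using this
  | cons ht hr ih =>
    rename_i q1 q2 q3 b u0 η n0
    intro v
    obtain ⟨f, hf, hrun⟩ := ih hF v
    refine ⟨f, hf, ?_⟩
    have h := CEFA.Reach.cons (mem3 ht) hrun
    rw [pad_add] at h
    have hc : pad 0 (((b :: u0 : List σ).length : ℤ)) (η + n0) =
        pad (0 + 0) (1 + (u0.length : ℤ)) (η + n0) :=
      pad_congr (zero_add 0).symm (by push_cast [List.length_cons]; ring) rfl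
    rw [hc]
    exact h

lemma main_run {w : List σ} {i l : ℕ} {n : Fin k → ℤ} (hle : i + l ≤ w.length)
    (hL : ((w.drop i).take l, n) ∈ A.Lang) :
    ∃ f ∈ (B A).F, Reach (B A) pre w (pad (i : ℤ) (l : ℤ) n) f := by
  obtain ⟨q₀, qf, hI, hF, hrun⟩ := hL
  have hxlen : (w.take i).length = i := by
    rw [List.length_take]; omega
  have hulen : ((w.drop i).take l).length = l := by
    rw [List.length_take, List.length_drop]; omega
  have hw : w = w.take i ++ ((w.drop i).take l ++ (w.drop i).drop l) := by
    rw [List.take_append_drop, List.take_append_drop]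
  cases hu : (w.drop i).take l with
  | nil =>
    rw [hu] at hrun
    cases hrun
    have hne : (A.I ∩ A.F).Nonempty := ⟨q₀, hI, hF⟩
    have hl0 : l = 0 := by rw [hu] at hulen; simpa using hulen.symm
    cases hv : (w.drop i).drop l with
    | nil =>
      refine ⟨pre, Or.inr (Or.inr ⟨rfl, hne⟩), ?_⟩
      have hwi : w = w.take i := by rw [hw, hu, hv]; simp
      have := pre_run (A := A) (w.take i)
      rw [hxlen] at this
      rw [hwi]
      simp only [hl0, Nat.cast_zero] at this ⊢; exact this
    | cons b v' =>
      refine ⟨post, Or.inl rfl, ?_⟩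
      have h2 : Reach (B A) pre (b :: v') (0 : Fin (2+k) → ℤ) post := by
        simpa using CEFA.Reach.cons (mem5 hne b) (post_run (A := A) v')
      have := reach_trans (pre_run (A := A) (w.take i)) h2
      rw [hxlen, add_zero] at this
      rw [hw, hu, hv]
      simp only [hl0, Nat.cast_zero, List.nil_append] at this ⊢; exact this
  | cons a u' =>
    rw [hu] at hrun
    cases hrun with
    | cons ht hr =>
      rename_i q1 η n'
      obtain ⟨f, hf, hrun2⟩ := mid_run hr hF ((w.drop i).drop l)
      have h2 := CEFA.Reach.cons (mem2 ht hI) hrun2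
      have h3 := reach_trans (pre_run (A := A) (w.take i)) h2
      rw [hxlen] at h3
      refine ⟨f, hf, ?_⟩
      have hwe : w = w.take i ++ (a :: (u' ++ (w.drop i).drop l)) := by
        conv_lhs => rw [hw, hu]
        rw [List.cons_append]
      rw [hwe]
      have hl : (l : ℤ) = 1 + (u'.length : ℤ) := by
        rw [hu] at hulen; push_cast [← hulen]; push_cast [List.length_cons]; ring
      have hcost : pad (i : ℤ) (l : ℤ) (η + n') =
          pad (i : ℤ) 0 0 + (pad 0 1 η + pad 0 (u'.length : ℤ) n') := by
        rw [pad_add, pad_add]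
        exact pad_congr (by ring) (by rw [hl]; ring) (by rw [zero_add])
      exact hcost.symm ▸ h3

end

end SubstrCEFA

/-- for a CEFA `A` with `k` registers, the set of pairs `(w, (i, ℓ, n))` with
`0 ≤ i`, `0 ≤ ℓ`, `i + ℓ ≤ |w|` and `(w[i..i+ℓ−1], n) ∈ L(A)` is a CERL with `2 + k`
registers; i.e. the cost-enriched pre-image of `L(A)` under the substring function is a
cost-enriched recognisable relation. -/
theorem substring_preimage_isCERL {σ : Type} [Fintype σ] {k : ℕ}
    (A : CEFA σ k) (hA : A.IsFinite) :
    IsCERL {p : List σ × (Fin (2 + k) → ℤ) | ∃ (i l : ℕ) (n : Fin k → ℤ),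
      p.2 = Fin.append ![(i : ℤ), (l : ℤ)] n ∧ i + l ≤ p.1.length ∧
      ((p.1.drop i).take l, n) ∈ A.Lang} := by
  refine ⟨SubstrCEFA.B A, SubstrCEFA.B_finite A hA, ?_⟩
  ext ⟨w, c⟩
  simp only [CEFA.Lang, Set.mem_setOf_eq]
  constructor
  · rintro ⟨q₀, qf, hq₀, hqf, hrun⟩
    obtain rfl : q₀ = SubstrCEFA.St.pre := hq₀
    obtain ⟨i, l, n, hc, hle, hL⟩ := SubstrCEFA.pre_reach hrun hqf rfl
    exact ⟨i, l, n, hc, hle, hL⟩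
  · rintro ⟨i, l, n, hc, hle, hL⟩
    obtain ⟨f, hf, hrun⟩ := SubstrCEFA.main_run hle hL
    exact ⟨SubstrCEFA.St.pre, f, rfl, hf, by rw [hc]; exact hrun⟩
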